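/- Let (G, (N_1,…,N_k)) be a partitioned k-probe threshold graph where G has at least one vertex. Then G has an isolated vertex, or there exists a vertex ω such that every vertex z that is distinct from ω and not adjacent to ω satisfies ω ∈ N_i and z ∈ N_i for some i (a probe universal vertex). -/

import Mathlib

open SimpleGraph

/-- The graph `2K₂`: two disjoint edges on four vertices. -/
def twoK2 : SimpleGraph (Fin 4) :=
  SimpleGraph.fromEdgeSet {s(0, 1), s(2, 3)}

/-- A graph is a threshold graph if it has no induced subgraph isomorphic to
`P₄`, `C₄`, or `2K₂`. -/
def IsThresholdGraph {V : Type*} (H : SimpleGraph V) : Prop :=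
  IsEmpty (SimpleGraph.pathGraph 4 ↪g H) ∧ IsEmpty (SimpleGraph.cycleGraph 4 ↪g H) ∧
    IsEmpty (twoK2 ↪g H)

/-- A set of vertices is independent if its members are pairwise nonadjacent. -/
def IsIndepSet {V : Type*} (G : SimpleGraph V) (s : Set V) : Prop :=
  s.Pairwise fun u v => ¬ G.Adj u v

/-- `G` has threshold-width at most `k`: there are `k` independent sets `N i` and a
threshold graph `H` on the same vertex set containing `G` such that every edge of `H`
not in `G` has both endpoints in a common `N i`. -/
def ThresholdWidthAtMost {V : Type*} (G : SimpleGraph V) (k : ℕ) : Prop :=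
  ∃ (N : Fin k → Set V) (H : SimpleGraph V),
    (∀ i, _root_.IsIndepSet G (N i)) ∧ IsThresholdGraph H ∧ G ≤ H ∧
      ∀ x y, H.Adj x y → ¬ G.Adj x y → ∃ i, x ∈ N i ∧ y ∈ N i

/-- `(G, N)` is a partitioned `k`-probe threshold graph: the `N i` are independent sets
and there is a threshold embedding of `G` whose extra edges lie in common sets `N i`. -/
def PartitionedKProbeThreshold {V : Type*} (G : SimpleGraph V) {k : ℕ}
    (N : Fin k → Set V) : Prop :=
  (∀ i, _root_.IsIndepSet G (N i)) ∧
    ∃ H : SimpleGraph V, IsThresholdGraph H ∧ G ≤ H ∧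
      ∀ x y, H.Adj x y → ¬ G.Adj x y → ∃ i, x ∈ N i ∧ y ∈ N i

lemma twoK2_adj (u v : Fin 4) : twoK2.Adj u v ↔
    (u = 0 ∧ v = 1) ∨ (u = 1 ∧ v = 0) ∨ (u = 2 ∧ v = 3) ∨ (u = 3 ∧ v = 2) := by
  fin_cases u <;> fin_cases v <;>
    simp [twoK2, Sym2.eq, Sym2.rel_iff', Prod.ext_iff]

lemma pg4_adj (u v : Fin 4) : (SimpleGraph.pathGraph 4).Adj u v ↔
    (u = 0 ∧ v = 1) ∨ (u = 1 ∧ v = 0) ∨ (u = 1 ∧ v = 2) ∨ (u = 2 ∧ v = 1) ∨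
    (u = 2 ∧ v = 3) ∨ (u = 3 ∧ v = 2) := by
  rw [pathGraph_adj]; revert u v; decide

lemma cg4_adj (u v : Fin 4) : (SimpleGraph.cycleGraph 4).Adj u v ↔
    (u = 0 ∧ v = 1) ∨ (u = 1 ∧ v = 0) ∨ (u = 1 ∧ v = 2) ∨ (u = 2 ∧ v = 1) ∨
    (u = 2 ∧ v = 3) ∨ (u = 3 ∧ v = 2) ∨ (u = 3 ∧ v = 0) ∨ (u = 0 ∧ v = 3) := by
  rw [cycleGraph_adj']; revert u v; decide

lemma c4_embed {V : Type*} {H : SimpleGraph V} (u v a b : V)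
    (huv : u ≠ v) (hua : u ≠ a) (hub : u ≠ b) (hva : v ≠ a) (hvb : v ≠ b) (hab : a ≠ b)
    (e1 : H.Adj u v) (e2 : H.Adj v a) (e3 : H.Adj a b) (e4 : H.Adj b u)
    (n1 : ¬H.Adj u a) (n2 : ¬H.Adj v b) :
    Nonempty (SimpleGraph.cycleGraph 4 ↪g H) := by
  have e1' := H.adj_symm e1; have e2' := H.adj_symm e2
  have e3' := H.adj_symm e3; have e4' := H.adj_symm e4
  have n1' : ¬H.Adj a u := fun h => n1 (H.adj_symm h)
  have n2' : ¬H.Adj b v := fun h => n2 (H.adj_symm h)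
  refine ⟨⟨![u, v, a, b], ?_⟩, ?_⟩
  · intro i j hij; fin_cases i <;> fin_cases j <;> simp_all
  · intro i j; show H.Adj (![u, v, a, b] i) (![u, v, a, b] j) ↔ _
    fin_cases i <;> fin_cases j <;>
      simp_all [cg4_adj, fun w => H.irrefl (v := w), Fin.ext_iff] <;> omega

lemma p4_embed {V : Type*} {H : SimpleGraph V} (u v a b : V)
    (huv : u ≠ v) (hua : u ≠ a) (hub : u ≠ b) (hva : v ≠ a) (hvb : v ≠ b) (hab : a ≠ b)
    (e1 : H.Adj u v) (e2 : H.Adj v a) (e3 : H.Adj a b)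
    (n1 : ¬H.Adj u a) (n2 : ¬H.Adj u b) (n3 : ¬H.Adj v b) :
    Nonempty (SimpleGraph.pathGraph 4 ↪g H) := by
  have e1' := H.adj_symm e1; have e2' := H.adj_symm e2
  have e3' := H.adj_symm e3
  have n1' : ¬H.Adj a u := fun h => n1 (H.adj_symm h)
  have n2' : ¬H.Adj b u := fun h => n2 (H.adj_symm h)
  have n3' : ¬H.Adj b v := fun h => n3 (H.adj_symm h)
  refine ⟨⟨![u, v, a, b], ?_⟩, ?_⟩
  · intro i j hij; fin_cases i <;> fin_cases j <;> simp_all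
  · intro i j; show H.Adj (![u, v, a, b] i) (![u, v, a, b] j) ↔ _
    fin_cases i <;> fin_cases j <;>
      simp_all [pg4_adj, fun w => H.irrefl (v := w), Fin.ext_iff] <;> omega

lemma twoK2_embed {V : Type*} {H : SimpleGraph V} (u v a b : V)
    (huv : u ≠ v) (hua : u ≠ a) (hub : u ≠ b) (hva : v ≠ a) (hvb : v ≠ b) (hab : a ≠ b)
    (e1 : H.Adj u v) (e2 : H.Adj a b)
    (n1 : ¬H.Adj u a) (n2 : ¬H.Adj u b) (n3 : ¬H.Adj v a) (n4 : ¬H.Adj v b) :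
    Nonempty (twoK2 ↪g H) := by
  have e1' := H.adj_symm e1; have e2' := H.adj_symm e2
  have n1' : ¬H.Adj a u := fun h => n1 (H.adj_symm h)
  have n2' : ¬H.Adj b u := fun h => n2 (H.adj_symm h)
  have n3' : ¬H.Adj a v := fun h => n3 (H.adj_symm h)
  have n4' : ¬H.Adj b v := fun h => n4 (H.adj_symm h)
  refine ⟨⟨![u, v, a, b], ?_⟩, ?_⟩
  · intro i j hij; fin_cases i <;> fin_cases j <;> simp_all
  · intro i j; show H.Adj (![u, v, a, b] i) (![u, v, a, b] j) ↔ _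
    fin_cases i <;> fin_cases j <;>
      simp_all [twoK2_adj, fun w => H.irrefl (v := w), Fin.ext_iff] <;> omega

/-- Neighborhood comparability in a threshold graph. -/
lemma threshold_comparable {V : Type*} {H : SimpleGraph V} (hH : IsThresholdGraph H)
    (u v : V) :
    (∀ w, w ≠ v → H.Adj u w → H.Adj v w) ∨ (∀ w, w ≠ u → H.Adj v w → H.Adj u w) := by
  by_contra hc
  push_neg at hc
  obtain ⟨⟨b, hbv, hub, hvb⟩, ⟨a, hau, hva, hua⟩⟩ := hc
  -- edges: u-b, v-a; non-edges: v-b, u-a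
  have hbu : b ≠ u := fun h => H.irrefl (h ▸ hub)
  have hav : a ≠ v := fun h => H.irrefl (h ▸ hva)
  have huv : u ≠ v := fun h => hvb (h ▸ hub)
  have hab : a ≠ b := fun h => hvb (h ▸ hva)
  by_cases huv' : H.Adj u v <;> by_cases hab' : H.Adj a b
  · -- C4 : u - v - a - b - u
    exact hH.2.1.elim (c4_embed u v a b huv hau.symm hbu.symm hav.symm hbv.symm hab
      huv' hva hab' (H.adj_symm hub) hua hvb).some
  · -- P4 : b - u - v - a
    exact hH.1.elim (p4_embed b u v a hbu hbv hab.symm huv hau.symm hav.symm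
      (H.adj_symm hub) huv' hva (fun h => hvb (H.adj_symm h))
      (fun h => hab' (H.adj_symm h)) hua).some
  · -- P4 : u - b - a - v
    exact hH.1.elim (p4_embed u b a v hbu.symm hau.symm huv hab.symm hbv hav
      hub (H.adj_symm hab') (H.adj_symm hva) hua huv'
      (fun h => hvb (H.adj_symm h))).some
  · -- 2K2 : edges u-b and v-a
    exact hH.2.2.elim (twoK2_embed u b v a hbu.symm huv hau.symm hbv hab.symm hav.symm
      hub hva huv' hua (fun h => hvb (H.adj_symm h)) (fun h => hab' (H.adj_symm h))).some

/-- A nonempty partitioned `k`-probe threshold graph has an isolated vertex or a probe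
universal vertex. -/
theorem partitioned_has_isolated_or_probe_universal {V : Type*} [Fintype V] [Nonempty V]
    (G : SimpleGraph V) {k : ℕ} (N : Fin k → Set V)
    (h : PartitionedKProbeThreshold G N) :
    (∃ x : V, ∀ y, ¬ G.Adj x y) ∨
    (∃ ω : V, ∀ z, z ≠ ω → ¬ G.Adj ω z → ∃ i, ω ∈ N i ∧ z ∈ N i) := by
  classical
  obtain ⟨hN, H, hH, hGH, hextra⟩ := h
  by_cases hiso : ∃ x : V, ∀ y, ¬ G.Adj x y
  · exact Or.inl hiso
  push_neg at hiso
  right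
  -- pick a vertex of maximal H-degree
  obtain ⟨ω, -, hmax⟩ := Finset.exists_max_image (Finset.univ : Finset V) (fun v => H.degree v)
    ⟨Classical.arbitrary V, Finset.mem_univ _⟩
  -- ω dominates everything
  have hdom : ∀ v w, w ≠ ω → H.Adj v w → H.Adj ω w := by
    intro v
    rcases threshold_comparable hH v ω with h1 | h1
    · exact h1
    · -- ω's neighborhood (minus v) is contained in v's (minus ω); degrees force equality
      intro w hwo hvw
      by_contra how
      have hsub : (H.neighborFinset ω).erase v ⊆ (H.neighborFinset v).erase ω := by
        intro x hx
        rw [Finset.mem_erase, mem_neighborFinset] at hx ⊢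
        refine ⟨fun hxo => H.irrefl (hxo ▸ hx.2), h1 x hx.1 hx.2⟩
      have hcard : ((H.neighborFinset ω).erase v).card ≤
          ((H.neighborFinset v).erase ω).card := Finset.card_le_card hsub
      have hvo : v ≠ ω := fun h => how (h ▸ hvw)
      have hadj_iff : v ∈ H.neighborFinset ω ↔ ω ∈ H.neighborFinset v := by
        simp [mem_neighborFinset, adj_comm]
      have hdv : H.degree v ≤ H.degree ω := hmax v (Finset.mem_univ v)
      -- compute both cardinalities
      by_cases hmem : v ∈ H.neighborFinset ω
      · have hmem' : ω ∈ H.neighborFinset v := hadj_iff.mp hmem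
        rw [Finset.card_erase_of_mem hmem, Finset.card_erase_of_mem hmem',
          card_neighborFinset_eq_degree, card_neighborFinset_eq_degree] at hcard
        have hpos : 1 ≤ H.degree ω := by
          rw [← card_neighborFinset_eq_degree]; exact Finset.card_pos.mpr ⟨v, hmem⟩
        have hpos' : 1 ≤ H.degree v := by
          rw [← card_neighborFinset_eq_degree]; exact Finset.card_pos.mpr ⟨ω, hmem'⟩
        have hdeq : H.degree ω = H.degree v := le_antisymm (by omega) hdv
        have : (H.neighborFinset ω).erase v = (H.neighborFinset v).erase ω := by
          apply Finset.eq_of_subset_of_card_le hsub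
          rw [Finset.card_erase_of_mem hmem, Finset.card_erase_of_mem hmem',
            card_neighborFinset_eq_degree, card_neighborFinset_eq_degree, hdeq]
        have hw : w ∈ (H.neighborFinset ω).erase v := by
          rw [this, Finset.mem_erase, mem_neighborFinset]; exact ⟨hwo, hvw⟩
        rw [Finset.mem_erase, mem_neighborFinset] at hw
        exact how hw.2
      · have hmem' : ω ∉ H.neighborFinset v := fun hx => hmem (hadj_iff.mpr hx)
        rw [Finset.erase_eq_of_notMem hmem, Finset.erase_eq_of_notMem hmem',
          card_neighborFinset_eq_degree, card_neighborFinset_eq_degree] at hcard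
        have hdeq : H.degree ω = H.degree v := le_antisymm hcard hdv
        have : H.neighborFinset ω = H.neighborFinset v := by
          apply Finset.eq_of_subset_of_card_le
          · rw [← Finset.erase_eq_of_notMem hmem, ← Finset.erase_eq_of_notMem hmem']
            exact hsub
          · rw [card_neighborFinset_eq_degree, card_neighborFinset_eq_degree, hdeq]
        have hw : w ∈ H.neighborFinset ω := by
          rw [this, mem_neighborFinset]; exact hvw
        rw [mem_neighborFinset] at hw
        exact how hw
  -- ω is H-universal
  refine ⟨ω, fun z hzo hGz => ?_⟩
  have hHz : H.Adj ω z := by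
    -- z has a G-neighbor w, hence an H-neighbor; w is dominated by ω twice over
    obtain ⟨w, hw⟩ := hiso z
    have hzw : H.Adj z w := hGH hw
    have hwz : H.Adj w z := H.adj_symm hzw
    by_cases hwo : w = ω
    · exact H.adj_symm (hwo ▸ hzw)
    · -- w ≠ ω, so ω ~ w (dominating z); then ω ~ z (dominating w)
      exact hdom w z hzo hwz
  exact hextra ω z hHz hGz
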